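/- Let c_S and c_P be real numbers with 0 < c_S < c_P. Then there exist unit vectors ξ⁽⁰⁾, ξ⁽¹⁾, ξ⁽²⁾ ∈ EuclideanSpace ℝ (Fin 3) and nonzero real numbers κ₀, κ₁, κ₂ such that κ₀·(c_S, ξ⁽⁰⁾) + κ₁·(c_P, ξ⁽¹⁾) + κ₂·(c_S, ξ⁽²⁾) = 0 in ℝ × EuclideanSpace ℝ (Fin 3), and ξ⁽⁰⁾ and ξ⁽²⁾ are linearly independent. -/

import Mathlib

theorem stmt_10 (cS cP : ℝ) (hS : 0 < cS) (hSP : cS < cP) :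
    ∃ (ξ0 ξ1 ξ2 : EuclideanSpace ℝ (Fin 3)) (κ0 κ1 κ2 : ℝ),
      ‖ξ0‖ = 1 ∧ ‖ξ1‖ = 1 ∧ ‖ξ2‖ = 1 ∧
      κ0 ≠ 0 ∧ κ1 ≠ 0 ∧ κ2 ≠ 0 ∧
      κ0 • ((cS, ξ0) : ℝ × EuclideanSpace ℝ (Fin 3))
        + κ1 • ((cP, ξ1) : ℝ × EuclideanSpace ℝ (Fin 3))
        + κ2 • ((cS, ξ2) : ℝ × EuclideanSpace ℝ (Fin 3)) = 0 ∧
      LinearIndependent ℝ ![ξ0, ξ2] := by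
  have hP : 0 < cP := hS.trans hSP
  set a : ℝ := cS / cP with ha
  have ha0 : 0 < a := div_pos hS hP
  have ha1 : a < 1 := (div_lt_one hP).mpr hSP
  have ha2 : a ^ 2 < 1 := by nlinarith
  set b : ℝ := Real.sqrt (1 - a ^ 2) with hb
  have hb2 : b ^ 2 = 1 - a ^ 2 := Real.sq_sqrt (by nlinarith)
  have hb0 : 0 < b := Real.sqrt_pos.mpr (by nlinarith)
  refine ⟨(WithLp.equiv 2 _).symm ![a, b, 0], (WithLp.equiv 2 _).symm ![1, 0, 0],
    (WithLp.equiv 2 _).symm ![a, -b, 0], 1, -2 * cS / cP, 1, ?_, ?_, ?_, one_ne_zero,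
    ?_, one_ne_zero, ?_, ?_⟩
  · rw [EuclideanSpace.norm_eq]
    simp [Fin.sum_univ_three]
    rw [show a ^ 2 + b ^ 2 = 1 by nlinarith]
  · rw [EuclideanSpace.norm_eq]
    simp [Fin.sum_univ_three]
  · rw [EuclideanSpace.norm_eq]
    simp [Fin.sum_univ_three]
    rw [show a ^ 2 + b ^ 2 = 1 by nlinarith]
  · exact div_ne_zero (by nlinarith : -2 * cS < 0).ne hP.ne'
  · refine Prod.ext ?_ ?_
    · simp only [Prod.fst_add, Prod.smul_fst, smul_eq_mul, Prod.fst_zero, one_mul]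
      field_simp
      ring
    · refine PiLp.ext fun i => ?_
      have key : ∀ (v : Fin 3 → ℝ) (j : Fin 3),
          ((WithLp.equiv 2 (Fin 3 → ℝ)).symm v) j = v j :=
        fun v j => rfl
      fin_cases i <;>
        simp [PiLp.add_apply, PiLp.smul_apply, smul_eq_mul, key, ha] <;>
        field_simp <;> ring
  · rw [LinearIndependent.pair_iff]
    intro s t hst
    have h0 : s * a + t * a = 0 := by
      have := congrArg (fun v : EuclideanSpace ℝ (Fin 3) => v 0) hst
      simpa [PiLp.add_apply, PiLp.smul_apply, smul_eq_mul] using this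
    have h1 : s * b + t * (-b) = 0 := by
      have := congrArg (fun v : EuclideanSpace ℝ (Fin 3) => v 1) hst
      simpa [PiLp.add_apply, PiLp.smul_apply, smul_eq_mul] using this
    have h0' : (s + t) * a = 0 := by rw [add_mul]; exact h0
    have h1' : (s - t) * b = 0 := by rw [sub_mul]; linarith
    have e0 : s + t = 0 := (mul_eq_zero.mp h0').resolve_right ha0.ne'
    have e1 : s - t = 0 := (mul_eq_zero.mp h1').resolve_right hb0.ne'
    constructor <;> linarith
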